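/- If MPVC-LICQ holds at a feasible point x* ∈ C, then MPVC-MFCQ holds at x*. -/
import Mathlib


open Filter Topology

/-- The MPVC feasible set. -/
def feasSet {n m l q : ℕ} (g : Fin m → (Fin n → ℝ) → ℝ) (h : Fin l → (Fin n → ℝ) → ℝ)
    (G H : Fin q → (Fin n → ℝ) → ℝ) : Set (Fin n → ℝ) :=
  {x | (∀ i, g i x ≤ 0) ∧ (∀ j, h j x = 0) ∧ (∀ i, 0 ≤ H i x) ∧ (∀ i, G i x * H i x ≤ 0)}

/-- MPVC-LICQ at a feasible point: the gradients
`∇g_i (i ∈ I_g), ∇h_j (all j), ∇G_i (i ∈ I_{+0} ∪ I_{00}), ∇H_i (i ∈ I_0)`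
are linearly independent. -/
def MPVC_LICQ {n m l q : ℕ} (g : Fin m → (Fin n → ℝ) → ℝ) (h : Fin l → (Fin n → ℝ) → ℝ)
    (G H : Fin q → (Fin n → ℝ) → ℝ) (xs : Fin n → ℝ) : Prop :=
  LinearIndependent ℝ
    (fun idx : {i : Fin m // g i xs = 0} ⊕ Fin l
        ⊕ {i : Fin q // (0 < H i xs ∧ G i xs = 0) ∨ (H i xs = 0 ∧ G i xs = 0)}
        ⊕ {i : Fin q // H i xs = 0} =>
      Sum.elim (fun i => fderiv ℝ (g i.1) xs)
        (Sum.elim (fun j => fderiv ℝ (h j) xs)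
          (Sum.elim (fun i => fderiv ℝ (G i.1) xs)
            (fun i => fderiv ℝ (H i.1) xs))) idx)

/-- MPVC-MFCQ at a feasible point: the gradients `∇h_j (all j), ∇H_i (i ∈ I_{0+} ∪ I_{00})`
are linearly independent and there is a direction `d` with
`∇h_jᵀd = 0`, `∇H_iᵀd = 0 (i ∈ I_{0+} ∪ I_{00})`, `∇g_iᵀd < 0 (i ∈ I_g)`,
`∇H_iᵀd > 0 (i ∈ I_{0-})`, `∇G_iᵀd < 0 (i ∈ I_{+0} ∪ I_{00})`. -/
def MPVC_MFCQ {n m l q : ℕ} (g : Fin m → (Fin n → ℝ) → ℝ) (h : Fin l → (Fin n → ℝ) → ℝ)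
    (G H : Fin q → (Fin n → ℝ) → ℝ) (xs : Fin n → ℝ) : Prop :=
  LinearIndependent ℝ
    (fun idx : Fin l ⊕ {i : Fin q // H i xs = 0 ∧ 0 ≤ G i xs} =>
      Sum.elim (fun j => fderiv ℝ (h j) xs) (fun i => fderiv ℝ (H i.1) xs) idx)
  ∧ ∃ d : Fin n → ℝ,
      (∀ j, fderiv ℝ (h j) xs d = 0)
      ∧ (∀ i : Fin q, H i xs = 0 ∧ 0 ≤ G i xs → fderiv ℝ (H i) xs d = 0)
      ∧ (∀ i : Fin m, g i xs = 0 → fderiv ℝ (g i) xs d < 0)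
      ∧ (∀ i : Fin q, H i xs = 0 ∧ G i xs < 0 → 0 < fderiv ℝ (H i) xs d)
      ∧ (∀ i : Fin q, (0 < H i xs ∧ G i xs = 0) ∨ (H i xs = 0 ∧ G i xs = 0) →
          fderiv ℝ (G i) xs d < 0)

lemma exists_dual_vec {ι : Type*} [Fintype ι] {N : ℕ} (v : ι → ((Fin N → ℝ) →L[ℝ] ℝ))
    (hv : LinearIndependent ℝ v) (c : ι → ℝ) : ∃ d : Fin N → ℝ, ∀ k, v k d = c k := by
  classical
  let L : (Fin N → ℝ) →ₗ[ℝ] (ι → ℝ) := LinearMap.pi fun k => (v k : (Fin N → ℝ) →ₗ[ℝ] ℝ)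
  have hs : Function.Surjective L := by
    rw [← LinearMap.range_eq_top]
    by_contra hne
    obtain ⟨φ, hφ0, hφ⟩ := Submodule.exists_dual_map_eq_bot_of_lt_top
      (lt_top_iff_ne_top.mpr hne) inferInstance
    have hvan : ∀ x, φ (L x) = 0 := fun x => by
      have : φ (L x) ∈ Submodule.map φ (LinearMap.range L) :=
        Submodule.mem_map_of_mem ⟨x, rfl⟩
      rw [hφ] at this; simpa using this
    set cc : ι → ℝ := fun k => φ (Pi.single k 1) with hcc
    have hLx : ∀ x : Fin N → ℝ, L x = ∑ k, (v k x) • (Pi.single k 1 : ι → ℝ) := by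
      intro x
      funext j
      simp [L, LinearMap.pi_apply, Finset.sum_apply, Pi.single_apply]
    have hsum : ∀ x, ∑ k, cc k * v k x = 0 := by
      intro x
      have := hvan x
      rw [hLx x, map_sum] at this
      simpa [map_smul, smul_eq_mul, mul_comm] using this
    have hc0 : ∀ k, cc k = 0 := by
      apply Fintype.linearIndependent_iff.mp hv cc
      ext x
      simpa using hsum x
    have hφz : φ = 0 := by
      apply (Pi.basisFun ℝ ι).ext
      intro k
      simpa [Pi.basisFun_apply] using hc0 k
    exact hφ0 hφz
  obtain ⟨d, hd⟩ := hs c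
  exact ⟨d, fun k => congrFun hd k⟩

/-- MPVC-LICQ at a feasible point implies MPVC-MFCQ there. -/
theorem MFCQ_of_LICQ {n m l q : ℕ}
    (g : Fin m → (Fin n → ℝ) → ℝ) (h : Fin l → (Fin n → ℝ) → ℝ)
    (G H : Fin q → (Fin n → ℝ) → ℝ)
    (hg : ∀ i, ContDiff ℝ 1 (g i)) (hh : ∀ j, ContDiff ℝ 1 (h j))
    (hG : ∀ i, ContDiff ℝ 1 (G i)) (hH : ∀ i, ContDiff ℝ 1 (H i))
    (xs : Fin n → ℝ) (hxs : xs ∈ feasSet g h G H)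
    (hlicq : MPVC_LICQ g h G H xs) :
    MPVC_MFCQ g h G H xs := by
  classical
  set ι := ({i : Fin m // g i xs = 0} ⊕ Fin l
        ⊕ {i : Fin q // (0 < H i xs ∧ G i xs = 0) ∨ (H i xs = 0 ∧ G i xs = 0)}
        ⊕ {i : Fin q // H i xs = 0}) with hι
  set v : ι → ((Fin n → ℝ) →L[ℝ] ℝ) := fun idx =>
      Sum.elim (fun i => fderiv ℝ (g i.1) xs)
        (Sum.elim (fun j => fderiv ℝ (h j) xs)
          (Sum.elim (fun i => fderiv ℝ (G i.1) xs)
            (fun i => fderiv ℝ (H i.1) xs))) idx with hv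
  have hli : LinearIndependent ℝ v := hlicq
  constructor
  · -- linear independence of the MFCQ subfamily
    have he : Function.Injective
        (fun k : Fin l ⊕ {i : Fin q // H i xs = 0 ∧ 0 ≤ G i xs} =>
          (Sum.elim (fun j => Sum.inr (Sum.inl j))
            (fun i => Sum.inr (Sum.inr (Sum.inr ⟨i.1, i.2.1⟩))) k : ι)) := by
      rintro (a | a) (b | b) hab <;>
        simp only [Sum.elim_inl, Sum.elim_inr] at hab
      · exact congrArg Sum.inl (Sum.inl_injective (Sum.inr_injective hab))
      · exact (Sum.inl_ne_inr (Sum.inr_injective hab)).elim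
      · exact (Sum.inr_ne_inl (Sum.inr_injective hab)).elim
      · have h1 := Sum.inr_injective (Sum.inr_injective (Sum.inr_injective hab))
        have h2 : a.1 = b.1 := by injection h1
        exact congrArg Sum.inr (Subtype.ext h2)
    have := hli.comp _ he
    convert this using 1
    funext k
    rcases k with j | i <;> rfl
  · -- existence of the direction d
    set c : ι → ℝ := Sum.elim (fun _ => -1)
      (Sum.elim (fun _ => 0)
        (Sum.elim (fun _ => -1)
          (fun i => if G i.1 xs < 0 then 1 else 0))) with hc
    obtain ⟨d, hd⟩ := exists_dual_vec v hli c
    refine ⟨d, ?_, ?_, ?_, ?_, ?_⟩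
    · intro j; exact hd (Sum.inr (Sum.inl j))
    · intro i hi
      have := hd (Sum.inr (Sum.inr (Sum.inr ⟨i, hi.1⟩)))
      simpa [c, v, if_neg (not_lt.mpr hi.2)] using this
    · intro i hi
      have := hd (Sum.inl ⟨i, hi⟩)
      simp [c, v] at this
      linarith
    · intro i hi
      have := hd (Sum.inr (Sum.inr (Sum.inr ⟨i, hi.1⟩)))
      simp [c, v, if_pos hi.2] at this
      linarith
    · intro i hi
      have := hd (Sum.inr (Sum.inr (Sum.inl ⟨i, hi⟩)))
      simp [c, v] at this
      linarith
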